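/- Let n ≥ 1, m ≥ 1, M > 0, and 0 < γ ≤ M. Let B_0 = c·I ∈ ℝ^{n×n} with γ ≤ c ≤ M, and for j = 1,…,m define B_j := B_{j−1} − B_{j−1}s_j s_jᵀ B_{j−1}/(s_jᵀ B_{j−1} s_j) + y_j y_jᵀ/(y_jᵀ s_j), where s_j ≠ 0, s_jᵀ y_j ≥ γ‖s_j‖² > 0, and ‖y_j‖²/(y_jᵀ s_j) ≤ M for each j. Then det(B_m) ≥ γ^{n+m}/((m+n)^m M^m), and the smallest eigenvalue of B_m is at least (n−1)! γ^{n+m}/((m+n)^{n+m−1} M^{n+m−1}). -/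

import Mathlib

open Matrix Finset

lemma vmv {n : ℕ} (u v x : Fin n → ℝ) : (vecMulVec u v) *ᵥ x = (v ⬝ᵥ x) • u := by
  ext i
  simp only [vecMulVec, mulVec, dotProduct, Pi.smul_apply, smul_eq_mul, of_apply,
    Finset.sum_mul, Finset.mul_sum]
  exact Finset.sum_congr rfl fun j _ => by ring

lemma trvmv {n : ℕ} (u v : Fin n → ℝ) : (vecMulVec u v).trace = u ⬝ᵥ v := by
  simp [Matrix.trace, vecMulVec, dotProduct, Matrix.diag]

lemma vm {n : ℕ} {A : Matrix (Fin n) (Fin n) ℝ} (hA : A.IsHermitian) (v : Fin n → ℝ) :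
    vecMul v A = A *ᵥ v := by
  have h : Aᵀ = A := by ext i j; simpa using hA.apply i j
  conv_lhs => rw [← h]
  rw [vecMul_transpose]

lemma dsym {n : ℕ} {A : Matrix (Fin n) (Fin n) ℝ} (hA : A.IsHermitian) (v w : Fin n → ℝ) :
    v ⬝ᵥ A *ᵥ w = w ⬝ᵥ A *ᵥ v := by
  rw [dotProduct_mulVec, vm hA, dotProduct_comm]

lemma posdef_update {n : ℕ} {B : Matrix (Fin n) (Fin n) ℝ} (hB : B.PosDef)
    {s y : Fin n → ℝ} (hs : s ≠ 0) (hsy : 0 < s ⬝ᵥ y) :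
    (B - (1 / (s ⬝ᵥ B *ᵥ s)) • vecMulVec (B *ᵥ s) (vecMul s B)
      + (1 / (y ⬝ᵥ s)) • vecMulVec y y).PosDef := by
  have hys : 0 < y ⬝ᵥ s := by rwa [dotProduct_comm]
  have hq : 0 < s ⬝ᵥ B *ᵥ s := by simpa using hB.dotProduct_mulVec_pos hs
  have hBsym : ∀ i j, B i j = B j i := fun i j => by
    conv_lhs => rw [← hB.1.eq]
    simp [conjTranspose_apply]
  set q := s ⬝ᵥ B *ᵥ s with hqdef
  rw [vm hB.1]
  rw [posDef_iff_dotProduct_mulVec]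
  constructor
  · ext i j
    simp only [conjTranspose_apply, Matrix.add_apply, Matrix.sub_apply, Matrix.smul_apply,
      vecMulVec_apply, smul_eq_mul, star_trivial]
    rw [hBsym j i]; ring
  intro x hx
  have hval : star x ⬝ᵥ (B - (1 / q) • vecMulVec (B *ᵥ s) (B *ᵥ s)
      + (1 / (y ⬝ᵥ s)) • vecMulVec y y) *ᵥ x
      = x ⬝ᵥ B *ᵥ x - (x ⬝ᵥ B *ᵥ s) * (x ⬝ᵥ B *ᵥ s) / q
        + (y ⬝ᵥ x) * (y ⬝ᵥ x) / (y ⬝ᵥ s) := by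
    rw [star_trivial, add_mulVec, sub_mulVec, smul_mulVec, smul_mulVec,
      vmv, vmv, dotProduct_add, dotProduct_sub, dotProduct_smul, dotProduct_smul,
      dotProduct_smul]
    have h1 : (B *ᵥ s) ⬝ᵥ x = x ⬝ᵥ B *ᵥ s := by rw [dotProduct_comm]
    simp only [dotProduct_smul, smul_eq_mul, h1]
    have h2 : x ⬝ᵥ (B *ᵥ s) = x ⬝ᵥ B *ᵥ s := rfl
    rw [h2, dotProduct_comm x y]; ring
  rw [hval]
  by_cases hcol : ∃ α : ℝ, x = α • s
  · obtain ⟨α, rfl⟩ := hcol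
    have hα : α ≠ 0 := by rintro rfl; simp at hx
    simp only [smul_dotProduct, mulVec_smul, dotProduct_smul, smul_eq_mul, ← hqdef]
    have : α * (α * q) - α * q * (α * q) / q + α * (y ⬝ᵥ s) * (α * (y ⬝ᵥ s)) / (y ⬝ᵥ s)
        = α * α * (y ⬝ᵥ s) := by field_simp; ring
    rw [this]
    exact mul_pos (mul_self_pos.mpr hα) hys
  · push_neg at hcol
    set b := x ⬝ᵥ B *ᵥ s with hbdef
    have hv : x + (-(b / q)) • s ≠ 0 := by
      intro h
      apply hcol (b / q)
      have := eq_neg_of_add_eq_zero_left h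
      rw [this]; ext i; simp [neg_smul]
    have hpos := hB.dotProduct_mulVec_pos hv
    rw [star_trivial] at hpos
    have hexp : (x + (-(b / q)) • s) ⬝ᵥ B *ᵥ (x + (-(b / q)) • s)
        = x ⬝ᵥ B *ᵥ x - b * b / q := by
      rw [add_dotProduct, mulVec_add, mulVec_smul, dotProduct_add, dotProduct_add]
      simp only [smul_dotProduct, dotProduct_smul, smul_eq_mul, dsym hB.1 s x, ← hbdef, ← hqdef]
      field_simp
      ring
    rw [hexp] at hpos
    have h3 : 0 ≤ (y ⬝ᵥ x) * (y ⬝ᵥ x) / (y ⬝ᵥ s) := div_nonneg (mul_self_nonneg _) hys.le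
    linarith
lemma quad_le_trace (n : ℕ) (A : Matrix (Fin n) (Fin n) ℝ) (hA : A.PosSemidef)
    (x : Fin n → ℝ) : x ⬝ᵥ A *ᵥ x ≤ A.trace * (x ⬝ᵥ x) := by
  obtain ⟨C, rfl⟩ : ∃ C : Matrix (Fin n) (Fin n) ℝ, A = Cᴴ * C := by
    open scoped MatrixOrder in
    exact CStarAlgebra.nonneg_iff_eq_star_mul_self.mp hA.nonneg
  have h1 : x ⬝ᵥ (Cᴴ * C) *ᵥ x = ∑ i, (C *ᵥ x) i ^ 2 := by
    rw [← mulVec_mulVec, dotProduct_mulVec, ← transpose_transpose Cᴴ,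
      vecMul_transpose]
    have : Cᴴᵀ = C := by ext i j; simp [conjTranspose]
    rw [this]
    simp [dotProduct, sq]
  have h2 : (Cᴴ * C).trace = ∑ i, ∑ j, C i j ^ 2 := by
    rw [Finset.sum_comm]
    simp [Matrix.trace, Matrix.diag, Matrix.mul_apply, conjTranspose, sq]
  rw [h1, h2, Finset.sum_mul]
  apply Finset.sum_le_sum
  intro i _
  have := Finset.sum_mul_sq_le_sq_mul_sq Finset.univ (fun j => C i j) x
  calc (C *ᵥ x) i ^ 2 = (∑ j, C i j * x j) ^ 2 := by simp [mulVec, dotProduct]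
    _ ≤ (∑ j, C i j ^ 2) * (∑ j, x j ^ 2) := this
    _ = (∑ j, C i j ^ 2) * (x ⬝ᵥ x) := by simp [dotProduct, sq]

lemma entry_formula {n : ℕ} (A : Matrix (Fin n) (Fin n) ℝ) (V : Matrix (Fin 2) (Fin n) ℝ)
    (U : Matrix (Fin n) (Fin 2) ℝ) (k l : Fin 2) :
    (V * A * U) k l = (fun j => V k j) ⬝ᵥ A *ᵥ (fun i => U i l) := by
  simp only [Matrix.mul_apply, mulVec, dotProduct, Finset.sum_mul, Finset.mul_sum]
  rw [Finset.sum_comm]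
  exact Finset.sum_congr rfl fun j _ => Finset.sum_congr rfl fun c _ => by ring

lemma det_update {n : ℕ} {B : Matrix (Fin n) (Fin n) ℝ} (hB : B.PosDef)
    (s y : Fin n → ℝ) (hq : 0 < s ⬝ᵥ B *ᵥ s) (hys : 0 < y ⬝ᵥ s) :
    (B - (1 / (s ⬝ᵥ B *ᵥ s)) • vecMulVec (B *ᵥ s) (vecMul s B)
      + (1 / (y ⬝ᵥ s)) • vecMulVec y y).det
    = B.det * ((s ⬝ᵥ y) / (s ⬝ᵥ B *ᵥ s)) := by
  have hUnit : IsUnit B.det := hB.det_pos.ne'.isUnit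
  set q := s ⬝ᵥ B *ᵥ s with hqdef
  rw [vm hB.1]
  set u0 : Fin n → ℝ := fun i => (-(1/q)) * (B *ᵥ s) i with hu0
  set u1 : Fin n → ℝ := fun i => (1/(y ⬝ᵥ s)) * y i with hu1
  set U : Matrix (Fin n) (Fin 2) ℝ := Matrix.of fun i k => if k = 0 then u0 i else u1 i with hU
  set V : Matrix (Fin 2) (Fin n) ℝ :=
    Matrix.of fun k j => if k = 0 then (B *ᵥ s) j else y j with hV
  have hM : B - (1 / q) • vecMulVec (B *ᵥ s) (B *ᵥ s) + (1 / (y ⬝ᵥ s)) • vecMulVec y y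
      = B + U * V := by
    ext i j
    simp only [Matrix.add_apply, Matrix.sub_apply, Matrix.smul_apply, vecMulVec_apply,
      smul_eq_mul, Matrix.mul_apply, Fin.sum_univ_two, hU, hV, Matrix.of_apply]
    norm_num [hu0, hu1]
    ring
  rw [hM, Matrix.det_add_mul U V hUnit]
  congr 1
  have hinv1 : B⁻¹ *ᵥ (B *ᵥ s) = s := by
    rw [mulVec_mulVec, Matrix.nonsing_inv_mul _ hUnit, one_mulVec]
  have hBiH : (B⁻¹).IsHermitian := hB.1.inv
  have key : ∀ v : Fin n → ℝ, v ⬝ᵥ B⁻¹ *ᵥ (B *ᵥ s) = v ⬝ᵥ s := fun v => by rw [hinv1]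
  set W := V * B⁻¹ * U with hW
  have hcol0 : (fun i => U i 0) = (-(1/q)) • (B *ᵥ s) := by
    funext i; simp [hU, hu0]
  have hcol1 : (fun i => U i 1) = (1/(y ⬝ᵥ s)) • y := by
    funext i; simp [hU, hu1]
  have hrow0 : (fun j => V 0 j) = B *ᵥ s := by funext j; simp [hV]
  have hrow1 : (fun j => V 1 j) = y := by funext j; simp [hV]
  have e00 : W 0 0 = -1 := by
    rw [hW, entry_formula, hrow0, hcol0, mulVec_smul, dotProduct_smul, key,
      dotProduct_comm, ← hqdef]
    field_simp
    simp [hq.ne']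
  have e01 : W 0 1 = 1 := by
    rw [hW, entry_formula, hrow0, hcol1, mulVec_smul, dotProduct_smul,
      dsym hBiH, key, smul_eq_mul]
    field_simp
  have e10 : W 1 0 = -(1/q) * (y ⬝ᵥ s) := by
    rw [hW, entry_formula, hrow1, hcol0, mulVec_smul, dotProduct_smul, key]
    simp
  rw [det_fin_two]
  have a00 : (1 + W) 0 0 = 1 + W 0 0 := by simp [Matrix.add_apply]
  have a11 : (1 + W) 1 1 = 1 + W 1 1 := by simp [Matrix.add_apply]
  have a01 : (1 + W) 0 1 = W 0 1 := by simp [Matrix.add_apply, Matrix.one_apply]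
  have a10 : (1 + W) 1 0 = W 1 0 := by simp [Matrix.add_apply, Matrix.one_apply]
  rw [a00, a11, a01, a10, e00, e01, e10, dotProduct_comm s y]
  field_simp
  ring

lemma binom_ineq (a b : ℝ) (ha : 0 ≤ a) (hb : 0 ≤ b) (k : ℕ) :
    (k + 1 : ℝ) * a * b ^ k ≤ (a + b) ^ (k + 1) := by
  rw [add_pow]
  have h1 : (1 : ℕ) ∈ Finset.range (k + 2) := by simp
  have := Finset.single_le_sum
    (f := fun i => a ^ i * b ^ (k + 1 - i) * ((k+1).choose i : ℝ))
    (fun i _ => by positivity) h1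
  simpa [mul_comm, mul_assoc, mul_left_comm] using this

lemma fact_prod_le {ι : Type*} (s : Finset ι) (f : ι → ℝ) (hf : ∀ i ∈ s, 0 ≤ f i) :
    (s.card).factorial * ∏ i ∈ s, f i ≤ (∑ i ∈ s, f i) ^ s.card := by
  induction s using Finset.cons_induction with
  | empty => simp
  | cons a s ha ih =>
    rw [Finset.prod_cons, Finset.sum_cons, Finset.card_cons]
    have hfa : 0 ≤ f a := hf a (Finset.mem_cons_self a s)
    have hfs : ∀ i ∈ s, 0 ≤ f i := fun i hi => hf i (Finset.mem_cons_of_mem hi)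
    have hsum : 0 ≤ ∑ i ∈ s, f i := Finset.sum_nonneg hfs
    have hprod : 0 ≤ ∏ i ∈ s, f i := Finset.prod_nonneg hfs
    calc ((s.card + 1).factorial : ℝ) * (f a * ∏ i ∈ s, f i)
        = (s.card + 1 : ℝ) * f a * ((s.card).factorial * ∏ i ∈ s, f i) := by
          rw [Nat.factorial_succ]; push_cast; ring
      _ ≤ (s.card + 1 : ℝ) * f a * (∑ i ∈ s, f i) ^ s.card := by
          apply mul_le_mul_of_nonneg_left (ih hfs); positivity
      _ ≤ (f a + ∑ i ∈ s, f i) ^ (s.card + 1) := binom_ineq _ _ hfa hsum _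

lemma trace_eq_sum_eig {n : ℕ} {A : Matrix (Fin n) (Fin n) ℝ} (hA : A.IsHermitian) :
    A.trace = ∑ i, hA.eigenvalues i := by
  nth_rewrite 1 [hA.spectral_theorem]
  rw [Unitary.conjStarAlgAut_apply]
  rw [Matrix.trace_mul_comm, ← Matrix.mul_assoc]
  have : (star (hA.eigenvectorUnitary : Matrix (Fin n) (Fin n) ℝ)) *
      (hA.eigenvectorUnitary : Matrix (Fin n) (Fin n) ℝ) = 1 :=
    Unitary.coe_star_mul_self _
  rw [this, Matrix.one_mul, Matrix.trace_diagonal]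
  simp

lemma spec_eig {n : ℕ} {A : Matrix (Fin n) (Fin n) ℝ} (hA : A.IsHermitian) (t : ℝ)
    (ht : t ∈ spectrum ℝ A) : ∃ i, hA.eigenvalues i = t := by
  have hdet : (t • (1 : Matrix (Fin n) (Fin n) ℝ) - A).det = 0 := by
    by_contra h
    have : IsUnit (t • (1 : Matrix (Fin n) (Fin n) ℝ) - A) :=
      (Matrix.isUnit_iff_isUnit_det _).2 (Ne.isUnit h)
    rw [spectrum.mem_iff] at ht
    exact ht (by simpa [Algebra.algebraMap_eq_smul_one] using this)
  have hdecomp : t • (1 : Matrix (Fin n) (Fin n) ℝ) - A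
      = (hA.eigenvectorUnitary : Matrix (Fin n) (Fin n) ℝ) *
        diagonal (fun i => t - hA.eigenvalues i) *
        (star (hA.eigenvectorUnitary : Matrix (Fin n) (Fin n) ℝ)) := by
    nth_rewrite 1 [hA.spectral_theorem]
    rw [Unitary.conjStarAlgAut_apply]
    have h1 : t • (1 : Matrix (Fin n) (Fin n) ℝ)
        = (hA.eigenvectorUnitary : Matrix (Fin n) (Fin n) ℝ) *
          (t • (1 : Matrix (Fin n) (Fin n) ℝ)) *
          (star (hA.eigenvectorUnitary : Matrix (Fin n) (Fin n) ℝ)) := by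
      rw [Matrix.mul_smul, Matrix.mul_one, Matrix.smul_mul,
        (Matrix.mem_unitaryGroup_iff).mp hA.eigenvectorUnitary.2]
    rw [h1, ← Matrix.sub_mul, ← Matrix.mul_sub]
    congr 2
    rw [Matrix.smul_one_eq_diagonal, Matrix.diagonal_sub]
    congr 1
  rw [hdecomp, Matrix.det_mul, Matrix.det_mul, mul_comm, ← mul_assoc, ← Matrix.det_mul,
    Unitary.coe_star_mul_self, Matrix.det_one, one_mul, Matrix.det_diagonal] at hdet
  obtain ⟨i, -, hi⟩ := Finset.prod_eq_zero_iff.mp hdet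
  exact ⟨i, by linarith [sub_eq_zero.mp hi]⟩
/-- BFGS (direct Hessian-approximation) updates starting from `B 0 = c • I`
with `γ ≤ c ≤ M`, using pairs `(s j, y j)` with `s j ≠ 0`, `s jᵀ y j ≥ γ‖s j‖² > 0` and
`‖y j‖²/(y jᵀ s j) ≤ M`, satisfy `det (B m) ≥ γ^(n+m)/((m+n)^m M^m)` and every (real)
eigenvalue of `B m` is at least `(n−1)! γ^(n+m)/((m+n)^(n+m−1) M^(n+m−1))`. -/
theorem stmt18 (n m : ℕ) (hn : 1 ≤ n) (hm : 1 ≤ m) (M γ c : ℝ)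
    (hM : 0 < M) (hγ : 0 < γ) (hγM : γ ≤ M) (hγc : γ ≤ c) (hcM : c ≤ M)
    (B : ℕ → Matrix (Fin n) (Fin n) ℝ) (s y : ℕ → Fin n → ℝ)
    (hB0 : B 0 = c • (1 : Matrix (Fin n) (Fin n) ℝ))
    (hs : ∀ j, 1 ≤ j → j ≤ m → s j ≠ 0)
    (hsy : ∀ j, 1 ≤ j → j ≤ m → γ * (s j ⬝ᵥ s j) ≤ s j ⬝ᵥ y j ∧ 0 < γ * (s j ⬝ᵥ s j))
    (hyM : ∀ j, 1 ≤ j → j ≤ m → (y j ⬝ᵥ y j) / (y j ⬝ᵥ s j) ≤ M)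
    (hrec : ∀ j, 1 ≤ j → j ≤ m →
      B j = B (j - 1)
        - (1 / (s j ⬝ᵥ (B (j - 1)).mulVec (s j))) •
            Matrix.vecMulVec ((B (j - 1)).mulVec (s j)) (Matrix.vecMul (s j) (B (j - 1)))
        + (1 / (y j ⬝ᵥ s j)) • Matrix.vecMulVec (y j) (y j)) :
    γ ^ (n + m) / (((m : ℝ) + n) ^ m * M ^ m) ≤ (B m).det ∧
      ∀ t ∈ spectrum ℝ (B m),
        (Nat.factorial (n - 1) : ℝ) * γ ^ (n + m) /
          (((m : ℝ) + n) ^ (n + m - 1) * M ^ (n + m - 1)) ≤ t := by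
  have hc : 0 < c := lt_of_lt_of_le hγ hγc
  set X : ℝ := (m : ℝ) + n with hX
  have hX0 : 0 < X := by positivity
  have hXM : 0 < X * M := by positivity
  -- the main induction
  have key : ∀ j, j ≤ m → (B j).PosDef ∧ (B j).trace ≤ ((n : ℝ) + j) * M ∧
      γ ^ (n + j) / (X ^ j * M ^ j) ≤ (B j).det := by
    intro j
    induction j with
    | zero =>
      intro _
      refine ⟨?_, ?_, ?_⟩
      · rw [hB0]
        rw [posDef_iff_dotProduct_mulVec]
        constructor
        · rw [IsHermitian, conjTranspose_smul, conjTranspose_one, star_trivial]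
        · intro x hx
          have hxx : 0 < x ⬝ᵥ x := by
            rcases (Finset.sum_nonneg fun i _ => mul_self_nonneg (x i) :
              (0:ℝ) ≤ x ⬝ᵥ x).lt_or_eq with h | h
            · exact h
            · exact absurd (dotProduct_self_eq_zero.mp h.symm) hx
          have : star x ⬝ᵥ (c • (1 : Matrix (Fin n) (Fin n) ℝ)) *ᵥ x = c * (x ⬝ᵥ x) := by
            rw [star_trivial, smul_mulVec, one_mulVec, dotProduct_smul, smul_eq_mul]
          rw [this]
          positivity
      · rw [hB0, Matrix.trace_smul, Matrix.trace_one, smul_eq_mul]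
        push_cast
        simp only [Fintype.card_fin]
        calc c * (n : ℝ) ≤ M * n := by
              apply mul_le_mul_of_nonneg_right hcM (by positivity)
          _ ≤ ((n : ℝ) + 0) * M := by ring_nf; rfl
      · rw [hB0, Matrix.det_smul, Matrix.det_one, Fintype.card_fin, mul_one]
        simp only [pow_zero, mul_one, Nat.add_zero]
        rw [div_one]
        exact pow_le_pow_left₀ hγ.le hγc n
    | succ k ih =>
      intro hk1
      obtain ⟨hPD, hTr, hDet⟩ := ih (by omega)
      have h1k : 1 ≤ k + 1 := by omega
      have hrec' : B (k+1) = B k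
          - (1 / (s (k+1) ⬝ᵥ (B k) *ᵥ (s (k+1)))) •
              Matrix.vecMulVec ((B k) *ᵥ (s (k+1))) (Matrix.vecMul (s (k+1)) (B k))
          + (1 / (y (k+1) ⬝ᵥ s (k+1))) • Matrix.vecMulVec (y (k+1)) (y (k+1)) := by
        simpa using hrec (k+1) h1k hk1
      have hsk : s (k+1) ≠ 0 := hs (k+1) h1k hk1
      obtain ⟨hsy1, hsy2⟩ := hsy (k+1) h1k hk1
      have hss : 0 < s (k+1) ⬝ᵥ s (k+1) := by nlinarith [hsy2, hγ]
      have hsys : 0 < s (k+1) ⬝ᵥ y (k+1) := lt_of_lt_of_le hsy2 hsy1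
      have hys : 0 < y (k+1) ⬝ᵥ s (k+1) := by rwa [dotProduct_comm]
      have hq : 0 < s (k+1) ⬝ᵥ (B k) *ᵥ (s (k+1)) := by simpa using hPD.dotProduct_mulVec_pos hsk
      have hTr0 : 0 ≤ (B k).trace := by
        calc (0:ℝ) ≤ (s (k+1) ⬝ᵥ (B k) *ᵥ (s (k+1))) / (s (k+1) ⬝ᵥ s (k+1)) := by positivity
          _ ≤ (B k).trace := by
            rw [div_le_iff₀ hss]
            exact quad_le_trace n (B k) hPD.posSemidef (s (k+1))
      refine ⟨?_, ?_, ?_⟩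
      · rw [hrec']
        exact posdef_update hPD hsk hsys
      · rw [hrec', Matrix.trace_add, Matrix.trace_sub, Matrix.trace_smul, Matrix.trace_smul,
          trvmv, trvmv, vm hPD.1, smul_eq_mul, smul_eq_mul]
        have h1 : 0 ≤ 1 / (s (k+1) ⬝ᵥ (B k) *ᵥ (s (k+1))) * ((B k *ᵥ s (k+1)) ⬝ᵥ (B k *ᵥ s (k+1))) := by
          have := Finset.sum_nonneg fun i (_ : i ∈ Finset.univ) =>
            mul_self_nonneg ((B k *ᵥ s (k+1)) i)
          positivity
        have h2 : 1 / (y (k+1) ⬝ᵥ s (k+1)) * (y (k+1) ⬝ᵥ y (k+1)) ≤ M := by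
          rw [one_div, inv_mul_eq_div]
          exact hyM (k+1) h1k hk1
        push_cast
        linarith
      · rw [hrec', det_update hPD _ _ hq hys]
        have hqup : s (k+1) ⬝ᵥ (B k) *ᵥ (s (k+1)) ≤ X * M * (s (k+1) ⬝ᵥ s (k+1)) := by
          calc s (k+1) ⬝ᵥ (B k) *ᵥ (s (k+1)) ≤ (B k).trace * (s (k+1) ⬝ᵥ s (k+1)) :=
                quad_le_trace n (B k) hPD.posSemidef (s (k+1))
            _ ≤ X * M * (s (k+1) ⬝ᵥ s (k+1)) := by
              apply mul_le_mul_of_nonneg_right _ hss.le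
              calc (B k).trace ≤ ((n : ℝ) + k) * M := hTr
                _ ≤ X * M := by
                  apply mul_le_mul_of_nonneg_right _ hM.le
                  rw [hX]
                  push_cast
                  have : (k : ℝ) ≤ (m : ℝ) := by exact_mod_cast (by omega : k ≤ m)
                  linarith
        have hratio : γ / (X * M) ≤ (s (k+1) ⬝ᵥ y (k+1)) / (s (k+1) ⬝ᵥ (B k) *ᵥ (s (k+1))) := by
          have heq : γ / (X * M) = γ * (s (k+1) ⬝ᵥ s (k+1)) / (X * M * (s (k+1) ⬝ᵥ s (k+1))) := by
            rw [mul_div_mul_right _ _ hss.ne']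
          rw [heq]
          exact div_le_div₀ hsys.le hsy1 hq hqup
        have hD0 : 0 < γ ^ (n + k) / (X ^ k * M ^ k) := by positivity
        calc γ ^ (n + (k+1)) / (X ^ (k+1) * M ^ (k+1))
            = (γ ^ (n + k) / (X ^ k * M ^ k)) * (γ / (X * M)) := by
              rw [pow_succ, pow_succ, ← pow_succ]
              field_simp
              ring
          _ ≤ (B k).det * ((s (k+1) ⬝ᵥ y (k+1)) / (s (k+1) ⬝ᵥ (B k) *ᵥ (s (k+1)))) := by
              apply mul_le_mul hDet hratio (by positivity) (le_trans hD0.le hDet)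
  obtain ⟨hPD, hTr, hDet⟩ := key m le_rfl
  have hTrX : (B m).trace ≤ X * M := by
    rw [hX]
    calc (B m).trace ≤ ((n : ℝ) + m) * M := hTr
      _ = ((m : ℝ) + n) * M := by ring
  refine ⟨hDet, ?_⟩
  intro t ht
  have hH := hPD.1
  obtain ⟨i, hi⟩ := spec_eig hH t ht
  have heigpos : ∀ j, 0 < hH.eigenvalues j := fun j => hPD.eigenvalues_pos j
  have hdet2 : (B m).det = ∏ j, hH.eigenvalues j := by
    have := hH.det_eq_prod_eigenvalues
    simpa using this
  have htr2 : (B m).trace = ∑ j, hH.eigenvalues j := trace_eq_sum_eig hH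
  set P : ℝ := ∏ j ∈ Finset.univ.erase i, hH.eigenvalues j with hP
  have hPpos : 0 < P :=
    Finset.prod_pos fun j _ => heigpos j
  have hsplit : hH.eigenvalues i * P = (B m).det := by
    rw [hdet2, hP, Finset.mul_prod_erase _ _ (Finset.mem_univ i)]
  have hcard : (Finset.univ.erase i).card = n - 1 := by
    rw [Finset.card_erase_of_mem (Finset.mem_univ i), Finset.card_univ, Fintype.card_fin]
  have hsumerase : ∑ j ∈ Finset.univ.erase i, hH.eigenvalues j ≤ X * M := by
    have := Finset.add_sum_erase Finset.univ hH.eigenvalues (Finset.mem_univ i)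
    have h1 : ∑ j ∈ Finset.univ.erase i, hH.eigenvalues j
        = (∑ j, hH.eigenvalues j) - hH.eigenvalues i := by linarith
    rw [h1, ← htr2]
    have := heigpos i
    linarith
  have hsumerase0 : 0 ≤ ∑ j ∈ Finset.univ.erase i, hH.eigenvalues j :=
    Finset.sum_nonneg fun j _ => (heigpos j).le
  have hA2 : ((n-1).factorial : ℝ) * P ≤ (X * M) ^ (n - 1) := by
    calc ((n-1).factorial : ℝ) * P
        ≤ (∑ j ∈ Finset.univ.erase i, hH.eigenvalues j) ^ (n - 1) := by
          have := fact_prod_le (Finset.univ.erase i) hH.eigenvalues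
            (fun j _ => (heigpos j).le)
          rwa [hcard] at this
      _ ≤ (X * M) ^ (n - 1) := pow_le_pow_left₀ hsumerase0 hsumerase _
  have hA1 : γ ^ (n + m) ≤ hH.eigenvalues i * P * (X ^ m * M ^ m) := by
    rw [hsplit]
    rw [div_le_iff₀ (by positivity)] at hDet
    exact hDet
  rw [div_le_iff₀ (by positivity)]
  rw [← hi]
  have hnm1 : n + m - 1 = m + (n - 1) := by omega
  have hfin : X ^ (n + m - 1) * M ^ (n + m - 1) = (X ^ m * M ^ m) * (X * M) ^ (n - 1) := by
    rw [hnm1, pow_add, pow_add, mul_pow]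
    ring
  calc ((n-1).factorial : ℝ) * γ ^ (n + m)
      ≤ ((n-1).factorial : ℝ) * (hH.eigenvalues i * P * (X ^ m * M ^ m)) := by
        apply mul_le_mul_of_nonneg_left hA1 (by positivity)
    _ = (hH.eigenvalues i * (X ^ m * M ^ m)) * (((n-1).factorial : ℝ) * P) := by ring
    _ ≤ (hH.eigenvalues i * (X ^ m * M ^ m)) * (X * M) ^ (n - 1) := by
        apply mul_le_mul_of_nonneg_left hA2
        have := heigpos i
        positivity
    _ = hH.eigenvalues i * (X ^ (n + m - 1) * M ^ (n + m - 1)) := by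
        rw [hfin]; ring
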